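/- Let H be a complex Hilbert space. Let D : H → H be a bounded self-adjoint invertible operator, ψ ∈ H a unit vector with D ψ = λ_D • ψ for some real λ_D < 0, and ω > 0 such that Re ⟪D v, v⟫ ≥ ω ‖v‖² for every v orthogonal to ψ. Let f : ℝ → ℝ be continuous and monotone nondecreasing. Then for every u ∈ H, Re ⟪(cfc f D)(D⁻¹ u), u⟫ ≥ f(λ_D) · Re ⟪D⁻¹ u, u⟫, where cfc f D denotes the continuous functional calculus of f applied to D. -/

import Mathlib

open scoped InnerProductSpace

private lemma aux_isUnit
    {H : Type*} [NormedAddCommGroup H] [InnerProductSpace ℂ H] [CompleteSpace H]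
    (D : H →L[ℂ] H)
    (hDsym : ∀ x y : H, ⟪D x, y⟫_ℂ = ⟪x, D y⟫_ℂ)
    (ψ : H) (hψ : ‖ψ‖ = 1) (lamD : ℝ) (hDψ : D ψ = lamD • ψ)
    (ω : ℝ)
    (hgap : ∀ v : H, ⟪ψ, v⟫_ℂ = 0 → ω * ‖v‖ ^ 2 ≤ (⟪v, D v⟫_ℂ).re)
    (ρ : ℝ) (h1 : lamD < ρ) (h2 : ρ < ω) :
    IsUnit (algebraMap ℝ (H →L[ℂ] H) ρ - D) := by
  have hDψ' : D ψ = (lamD : ℂ) • ψ := by rw [hDψ, Complex.coe_smul]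
  set T : H →L[ℂ] H := algebraMap ℝ (H →L[ℂ] H) ρ - D with hT
  have hTapp : ∀ x : H, T x = (ρ : ℂ) • x - D x := by
    intro x
    simp [hT, Algebra.algebraMap_eq_smul_one, ContinuousLinearMap.sub_apply,
      ContinuousLinearMap.smul_apply]
  have hTsymm : ∀ x y : H, ⟪T x, y⟫_ℂ = ⟪x, T y⟫_ℂ := by
    intro x y
    rw [hTapp, hTapp, inner_sub_left, inner_sub_right, inner_smul_left, inner_smul_right,
      hDsym x y]
    norm_num
  clear_value T
  set c : ℝ := min (ρ - lamD) (ω - ρ) with hc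
  have hcpos : 0 < c := lt_min (by linarith) (by linarith)
  have hbound : ∀ x : H, c * ‖x‖ ≤ ‖T x‖ := by
    intro x
    set a : ℂ := ⟪ψ, x⟫_ℂ with ha
    set v : H := x - a • ψ with hv
    have hψψ : ⟪ψ, ψ⟫_ℂ = 1 := by
      rw [inner_self_eq_norm_sq_to_K, hψ]; norm_num
    have hψv : ⟪ψ, v⟫_ℂ = 0 := by
      rw [hv, inner_sub_right, inner_smul_right, hψψ, mul_one, ha, sub_self]
    have hxdec : x = a • ψ + v := by rw [hv]; abel
    clear_value a v
    have hψDv : ⟪ψ, D v⟫_ℂ = 0 := by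
      rw [← hDsym ψ v, hDψ', inner_smul_left, hψv, mul_zero]
    have hψTv : ⟪ψ, T v⟫_ℂ = 0 := by
      rw [hTapp, inner_sub_right, inner_smul_right, hψv, hψDv, mul_zero, sub_zero]
    have hTx : T x = (a * ((ρ : ℂ) - (lamD : ℂ))) • ψ + T v := by
      rw [hxdec, map_add, hTapp (a • ψ), map_smul, hDψ']
      module
    have horthT : ⟪(a * ((ρ : ℂ) - (lamD : ℂ))) • ψ, T v⟫_ℂ = 0 := by
      rw [inner_smul_left, hψTv, mul_zero]
    have hTx2 : ‖T x‖ ^ 2 = ‖(a * ((ρ : ℂ) - (lamD : ℂ))) • ψ‖ ^ 2 + ‖T v‖ ^ 2 := by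
      rw [hTx, @norm_add_sq ℂ _ _ _ _, horthT]
      simp
    have hTv_lb : (ω - ρ) * ‖v‖ ≤ ‖T v‖ := by
      have hTvre : (⟪v, T v⟫_ℂ).re = ρ * ‖v‖ ^ 2 - (⟪v, D v⟫_ℂ).re := by
        have hvv : (⟪v, v⟫_ℂ).re = ‖v‖ ^ 2 := by
          have := inner_self_eq_norm_sq (𝕜 := ℂ) v
          simpa using this
        have hvvim : (⟪v, v⟫_ℂ).im = 0 := inner_self_im (𝕜 := ℂ) v
        rw [hTapp, inner_sub_right, inner_smul_right, Complex.sub_re, Complex.mul_re]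
        simp [hvv, hvvim]
        left; rw [← Complex.ofReal_pow, Complex.ofReal_re]
      have hq : (ω - ρ) * ‖v‖ ^ 2 ≤ -(⟪v, T v⟫_ℂ).re := by
        have hg := hgap v hψv
        rw [hTvre]
        linarith
      have hnorm : -(⟪v, T v⟫_ℂ).re ≤ ‖v‖ * ‖T v‖ := by
        calc -(⟪v, T v⟫_ℂ).re ≤ ‖⟪v, T v⟫_ℂ‖ := by
              exact (neg_le_abs _).trans (Complex.abs_re_le_norm _)
          _ ≤ ‖v‖ * ‖T v‖ := norm_inner_le_norm v (T v)
      rcases eq_or_lt_of_le (norm_nonneg v) with hv0 | hvpos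
      · rw [← hv0]
        simp

      · nlinarith
    have horthx : ⟪a • ψ, v⟫_ℂ = 0 := by rw [inner_smul_left, hψv, mul_zero]
    have hx2 : ‖x‖ ^ 2 = ‖a • ψ‖ ^ 2 + ‖v‖ ^ 2 := by
      nth_rewrite 1 [hxdec]
      rw [@norm_add_sq ℂ _ _ _ _, horthx]
      simp
    have hcomp1 : c * ‖a • ψ‖ ≤ ‖(a * ((ρ : ℂ) - (lamD : ℂ))) • ψ‖ := by
      rw [norm_smul, hψ, mul_one, norm_smul, hψ, mul_one, norm_mul]
      have hn : ‖((ρ : ℂ) - (lamD : ℂ))‖ = ρ - lamD := by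
        rw [← Complex.ofReal_sub, Complex.norm_real, Real.norm_eq_abs,
          abs_of_pos (by linarith)]
      rw [hn]
      have hm := min_le_left (ρ - lamD) (ω - ρ)
      have hanorm : (0:ℝ) ≤ ‖a‖ := norm_nonneg a
      nlinarith
    have hcomp2 : c * ‖v‖ ≤ ‖T v‖ := by
      have hm := min_le_right (ρ - lamD) (ω - ρ)
      have hvnorm : (0:ℝ) ≤ ‖v‖ := norm_nonneg v
      nlinarith
    have hsq : (c * ‖x‖) ^ 2 ≤ ‖T x‖ ^ 2 := by
      have s1 : (c * ‖a • ψ‖) ^ 2 ≤ ‖(a * ((ρ : ℂ) - (lamD : ℂ))) • ψ‖ ^ 2 :=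
        pow_le_pow_left₀ (by positivity) hcomp1 2
      have s2 : (c * ‖v‖) ^ 2 ≤ ‖T v‖ ^ 2 :=
        pow_le_pow_left₀ (by positivity) hcomp2 2
      have hexp : (c * ‖x‖) ^ 2 = (c * ‖a • ψ‖) ^ 2 + (c * ‖v‖) ^ 2 := by
        calc (c * ‖x‖) ^ 2 = c ^ 2 * ‖x‖ ^ 2 := by ring
          _ = c ^ 2 * ‖a • ψ‖ ^ 2 + c ^ 2 * ‖v‖ ^ 2 := by rw [hx2]; ring
          _ = (c * ‖a • ψ‖) ^ 2 + (c * ‖v‖) ^ 2 := by ring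
      rw [hexp, hTx2]
      linarith
    have h1' : 0 ≤ c * ‖x‖ := by positivity
    nlinarith [norm_nonneg (T x)]
  rw [ContinuousLinearMap.isUnit_iff_bijective,
    ContinuousLinearMap.bijective_iff_dense_range_and_antilipschitz]
  have hanti : AntilipschitzWith (⟨c, hcpos.le⟩ : NNReal)⁻¹ T := by
    apply ContinuousLinearMap.antilipschitz_of_bound
    intro x
    show ‖x‖ ≤ c⁻¹ * ‖T x‖
    rw [inv_mul_eq_div, le_div_iff₀ hcpos]
    calc ‖x‖ * (⟨c, hcpos.le⟩ : NNReal) = c * ‖x‖ := by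
          simp [mul_comm]
      _ ≤ ‖T x‖ := hbound x
  refine ⟨?_, ⟨_, hanti⟩⟩
  rw [Submodule.topologicalClosure_eq_top_iff, Submodule.eq_bot_iff]
  intro w hw
  have hTw : T w = 0 := by
    have h1' : ⟪T (T w), w⟫_ℂ = 0 := hw (T (T w)) ⟨T w, rfl⟩
    rw [hTsymm] at h1'
    exact inner_self_eq_zero.mp h1'
  have hb := hbound w
  rw [hTw, norm_zero] at hb
  have : ‖w‖ ≤ 0 := by nlinarith
  exact norm_eq_zero.mp (le_antisymm this (norm_nonneg w))

/-- The key spectral-representation inequality (e:DinvC_BLF) from Lemma 2.4: if `D` is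
bounded self-adjoint invertible with simple negative ground state `D ψ = lamD • ψ`
(`‖ψ‖ = 1`, `lamD < 0`) and `Re ⟪D v, v⟫ ≥ ω ‖v‖²` on `{ψ}⊥` with `ω > 0`, then for
every continuous monotone nondecreasing `f : ℝ → ℝ` and every `u ∈ H`,
`Re ⟪(cfc f D)(D⁻¹ u), u⟫ ≥ f(lamD) · Re ⟪D⁻¹ u, u⟫`. -/
theorem cfc_Dinv_lower_bound
    {H : Type*} [NormedAddCommGroup H] [InnerProductSpace ℂ H] [CompleteSpace H]
    (D Dinv : H →L[ℂ] H) (hD : IsSelfAdjoint D)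
    (hD1 : D.comp Dinv = ContinuousLinearMap.id ℂ H)
    (hD2 : Dinv.comp D = ContinuousLinearMap.id ℂ H)
    (ψ : H) (hψ : ‖ψ‖ = 1) (lamD : ℝ) (hlamD : lamD < 0) (hDψ : D ψ = lamD • ψ)
    (ω : ℝ) (hω : 0 < ω)
    (hgap : ∀ v : H, ⟪ψ, v⟫_ℂ = 0 → ω * ‖v‖ ^ 2 ≤ (⟪v, D v⟫_ℂ).re)
    (f : ℝ → ℝ) (hf : Continuous f) (hmono : Monotone f) :
    ∀ u : H, f lamD * (⟪u, Dinv u⟫_ℂ).re ≤ (⟪u, (cfc f D) (Dinv u)⟫_ℂ).re := by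
  intro u
  have hmul1 : D * Dinv = 1 := by rw [ContinuousLinearMap.mul_def, hD1]; rfl
  have hDunit : IsUnit D := by
    refine ⟨⟨D, Dinv, hmul1, ?_⟩, rfl⟩
    rw [ContinuousLinearMap.mul_def, hD2]; rfl
  have h0 : (0 : ℝ) ∉ spectrum ℝ D := spectrum.zero_notMem ℝ hDunit
  have hDsym : ∀ x y : H, ⟪D x, y⟫_ℂ = ⟪x, D y⟫_ℂ := fun x y =>
    (ContinuousLinearMap.isSelfAdjoint_iff_isSymmetric.mp hD) x y
  -- spectral sign fact
  set g : ℝ → ℝ := fun ρ => (f ρ - f lamD) * ρ⁻¹ with hg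
  have hspec : ∀ ρ ∈ spectrum ℝ D, 0 ≤ g ρ := by
    intro ρ hρ
    have hρ0 : ρ ≠ 0 := fun h => h0 (h ▸ hρ)
    rcases lt_or_gt_of_ne hρ0 with hneg | hpos
    · -- ρ < 0 : then ρ ≤ lamD
      have hle : ρ ≤ lamD := by
        by_contra hgt
        push_neg at hgt
        exact (spectrum.notMem_iff.mpr
          (aux_isUnit D hDsym ψ hψ lamD hDψ ω hgap ρ hgt (by linarith))) hρ
      have h1 : f ρ - f lamD ≤ 0 := sub_nonpos.mpr (hmono hle)
      have h2 : ρ⁻¹ ≤ 0 := inv_nonpos.mpr hneg.le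
      have h3 := mul_nonneg (neg_nonneg.2 h1) (neg_nonneg.2 h2)
      rw [neg_mul_neg] at h3
      exact h3
    · have h1 : 0 ≤ f ρ - f lamD := sub_nonneg.mpr (hmono (by linarith))
      have h2 : 0 ≤ ρ⁻¹ := (inv_pos.mpr hpos).le
      exact mul_nonneg h1 h2
  -- continuity facts
  have hinvcont : ContinuousOn (fun ρ : ℝ => ρ⁻¹) (spectrum ℝ D) := by
    apply ContinuousOn.inv₀ continuousOn_id
    intro x hx
    exact fun h => h0 (h ▸ hx)
  have hgcont : ContinuousOn g (spectrum ℝ D) :=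
    ((hf.continuousOn).sub continuousOn_const).mul hinvcont
  -- algebraic identity : cfc g D = cfc f D * Dinv - f lamD • Dinv
  have key : cfc g D * D = cfc f D - algebraMap ℝ (H →L[ℂ] H) (f lamD) := by
    calc cfc g D * D = cfc g D * cfc (id : ℝ → ℝ) D := by rw [cfc_id ℝ D]
      _ = cfc (fun ρ => g ρ * ρ) D := (cfc_mul g id D hgcont continuousOn_id).symm
      _ = cfc (fun ρ => f ρ - f lamD) D := by
          apply cfc_congr
          intro ρ hρ
          have hρ0 : ρ ≠ 0 := fun h => h0 (h ▸ hρ)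
          simp only [hg]; field_simp
      _ = cfc f D - cfc (fun _ => f lamD) D := by
          rw [cfc_sub f (fun _ => f lamD) D hf.continuousOn continuousOn_const]
      _ = cfc f D - algebraMap ℝ (H →L[ℂ] H) (f lamD) := by rw [cfc_const (f lamD) D]
  have key2 : cfc g D = cfc f D * Dinv - algebraMap ℝ (H →L[ℂ] H) (f lamD) * Dinv := by
    calc cfc g D = cfc g D * (D * Dinv) := by rw [hmul1, mul_one]
      _ = (cfc g D * D) * Dinv := by rw [mul_assoc]
      _ = _ := by rw [key, sub_mul]
  -- positivity
  have hpos : 0 ≤ cfc g D := cfc_nonneg hspec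
  have hip : (cfc g D).IsPositive := (ContinuousLinearMap.nonneg_iff_isPositive _).mp hpos
  have hnn : 0 ≤ (⟪(cfc g D) u, u⟫_ℂ).re := (Complex.nonneg_iff.mp (hip.inner_nonneg_left u)).1
  -- unpack
  have happly : (cfc g D) u = (cfc f D) (Dinv u) - (f lamD : ℂ) • (Dinv u) := by
    rw [key2]
    simp [ContinuousLinearMap.sub_apply, ContinuousLinearMap.mul_apply,
      Algebra.algebraMap_eq_smul_one, Complex.coe_smul]
  rw [happly] at hnn
  rw [inner_sub_left, inner_smul_left, Complex.sub_re] at hnn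
  have hre : ((starRingEnd ℂ) ((f lamD : ℝ) : ℂ) * ⟪Dinv u, u⟫_ℂ).re
      = f lamD * (⟪Dinv u, u⟫_ℂ).re := by
    rw [Complex.conj_ofReal, Complex.mul_re]
    simp
  rw [hre] at hnn
  have e1 : (⟪(cfc f D) (Dinv u), u⟫_ℂ).re = (⟪u, (cfc f D) (Dinv u)⟫_ℂ).re := by
    rw [← inner_conj_symm u, Complex.conj_re]
  have e2 : (⟪Dinv u, u⟫_ℂ).re = (⟪u, Dinv u⟫_ℂ).re := by
    rw [← inner_conj_symm u, Complex.conj_re]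
  rw [e1, e2] at hnn
  linarith
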